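/- Let s ↦ (x,y,t,θ,v,a,p_x,p_y,p_t,p_θ,p_v,p_a)(s) be a differentiable solution of the 2D Hamiltonian geodesic system (H2) with v(0) = a(0) = 0 and p_t(0) > 0, and set ψ(s) = v(s)·(cosθ(s)·p_x + sinθ(s)·p_y) + a(s)·p_v(s) + p_t. If S > 0 is such that p_θ(s)² + p_a(s)² < p_t² + p_θ(0)² + p_a(0)² for all s ∈ [0,S], then ψ(s) = √(p_t² + p_θ(0)² + p_a(0)² − p_θ(s)² − p_a(s)²) > 0 for all s ∈ [0,S]. -/

import Mathlib

/-- For a solution of the 2D Hamiltonian geodesic system (H2) with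
`v(0) = a(0) = 0` and `p_t(0) > 0`, as long as
`p_θ(s)² + p_a(s)² < p_t² + p_θ(0)² + p_a(0)²` on `[0, S]`, the factor
`ψ = v(cosθ·p_x + sinθ·p_y) + a·p_v + p_t` satisfies
`ψ(s) = √(p_t² + p_θ(0)² + p_a(0)² − p_θ(s)² − p_a(s)²) > 0`. -/
theorem stmt_14
    (x y t θ v a px py pt pθ pv pa : ℝ → ℝ)
    (ψ : ℝ → ℝ)
    (hψ : ∀ s, ψ s = v s * (Real.cos (θ s) * px s + Real.sin (θ s) * py s)
        + a s * pv s + pt s)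
    (hpx : ∀ s, HasDerivAt px 0 s)
    (hpy : ∀ s, HasDerivAt py 0 s)
    (hpt : ∀ s, HasDerivAt pt 0 s)
    (hpv : ∀ s, HasDerivAt pv
      (-(Real.cos (θ s) * px s + Real.sin (θ s) * py s) * ψ s) s)
    (hpθ : ∀ s, HasDerivAt pθ
      (v s * (Real.sin (θ s) * px s - Real.cos (θ s) * py s) * ψ s) s)
    (hpa : ∀ s, HasDerivAt pa (-(pv s) * ψ s) s)
    (hx : ∀ s, HasDerivAt x (v s * Real.cos (θ s) * ψ s) s)
    (hy : ∀ s, HasDerivAt y (v s * Real.sin (θ s) * ψ s) s)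
    (ht : ∀ s, HasDerivAt t (ψ s) s)
    (hv : ∀ s, HasDerivAt v (a s * ψ s) s)
    (hθ : ∀ s, HasDerivAt θ (pθ s) s)
    (ha : ∀ s, HasDerivAt a (pa s) s)
    (hv0 : v 0 = 0) (ha0 : a 0 = 0) (hpt0 : 0 < pt 0)
    (S : ℝ) (hS : 0 < S)
    (hbound : ∀ s ∈ Set.Icc (0 : ℝ) S,
      pθ s ^ 2 + pa s ^ 2 < pt 0 ^ 2 + pθ 0 ^ 2 + pa 0 ^ 2) :
    ∀ s ∈ Set.Icc (0 : ℝ) S,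
      ψ s = Real.sqrt (pt 0 ^ 2 + pθ 0 ^ 2 + pa 0 ^ 2 - pθ s ^ 2 - pa s ^ 2) ∧
      0 < ψ s := by

  -- derivative of ψ
  have hψd : ∀ s, HasDerivAt ψ
      (v s * (Real.cos (θ s) * py s - Real.sin (θ s) * px s) * pθ s
        + pa s * pv s) s := by
    intro s
    have hK : HasDerivAt (fun s => Real.cos (θ s) * px s + Real.sin (θ s) * py s)
        ((-Real.sin (θ s) * pθ s) * px s + Real.cos (θ s) * 0
          + ((Real.cos (θ s) * pθ s) * py s + Real.sin (θ s) * 0)) s :=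
      (((hθ s).cos.mul (hpx s)).add ((hθ s).sin.mul (hpy s)))
    have hD : HasDerivAt (fun s => v s * (Real.cos (θ s) * px s + Real.sin (θ s) * py s)
        + a s * pv s + pt s)
        ((a s * ψ s) * (Real.cos (θ s) * px s + Real.sin (θ s) * py s)
          + v s * ((-Real.sin (θ s) * pθ s) * px s + Real.cos (θ s) * 0
            + ((Real.cos (θ s) * pθ s) * py s + Real.sin (θ s) * 0))
          + (pa s * pv s + a s * (-(Real.cos (θ s) * px s + Real.sin (θ s) * py s) * ψ s))
          + 0) s :=
      (((hv s).mul hK).add ((ha s).mul (hpv s))).add (hpt s)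
    have heq : ψ = fun s => v s * (Real.cos (θ s) * px s + Real.sin (θ s) * py s)
        + a s * pv s + pt s := funext hψ
    rw [heq]
    convert hD using 1
    ring
  -- the conserved quantity
  have hF : ∀ s, HasDerivAt (fun s => ψ s ^ 2 + pθ s ^ 2 + pa s ^ 2) 0 s := by
    intro s
    have h : HasDerivAt (fun s => ψ s ^ 2 + pθ s ^ 2 + pa s ^ 2) _ s := (((hψd s).pow 2).add ((hpθ s).pow 2)).add ((hpa s).pow 2)
    convert h using 1
    push_cast
    ring
  have hconst : ∀ s : ℝ, ψ s ^ 2 + pθ s ^ 2 + pa s ^ 2 = pt 0 ^ 2 + pθ 0 ^ 2 + pa 0 ^ 2 := by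
    intro s
    have := is_const_of_deriv_eq_zero (f := fun s => ψ s ^ 2 + pθ s ^ 2 + pa s ^ 2)
      (fun u => (hF u).differentiableAt) (fun u => (hF u).deriv) s 0
    have hψ0 : ψ 0 = pt 0 := by rw [hψ 0, hv0, ha0]; ring
    simpa [hψ0] using this
  -- ψ never vanishes on [0,S]
  have hne : ∀ s ∈ Set.Icc (0 : ℝ) S, ψ s ≠ 0 := by
    intro s hs h0
    have hb := hbound s hs
    have := hconst s
    rw [h0] at this
    nlinarith
  have hcont : Continuous ψ := continuous_iff_continuousAt.2 fun u => (hψd u).continuousAt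
  intro s hs
  have hψpos : 0 < ψ s := by
    by_contra hle
    push_neg at hle
    have hψ0 : ψ 0 = pt 0 := by rw [hψ 0, hv0, ha0]; ring
    have h0S : (0 : ℝ) ∈ Set.Icc (0 : ℝ) S := ⟨le_refl _, le_of_lt hS⟩
    have hs0 : ψ s < 0 := lt_of_le_of_ne hle (hne s hs)
    have hcontOn : ContinuousOn ψ (Set.Icc 0 s) := hcont.continuousOn
    have : (0 : ℝ) ∈ Set.Icc (ψ s) (ψ 0) := ⟨le_of_lt hs0, by rw [hψ0]; exact le_of_lt hpt0⟩
    have := intermediate_value_Icc' hs.1 hcontOn this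
    obtain ⟨c, hc, hc0⟩ := this
    exact hne c ⟨hc.1, le_trans hc.2 hs.2⟩ hc0
  constructor
  · have h2 : ψ s ^ 2 = pt 0 ^ 2 + pθ 0 ^ 2 + pa 0 ^ 2 - pθ s ^ 2 - pa s ^ 2 := by
      have := hconst s; linarith
    rw [← h2, Real.sqrt_sq (le_of_lt hψpos)]
  · exact hψpos
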